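/- Let n_1 and n_2 be coprime Carmichael numbers, both of even index (class A), and suppose the product n = n_1 n_2 is a Carmichael number. If min{v_2(n_1 − 1), v_2(n_2 − 1)} = max{v_2(λ(n_1)), v_2(λ(n_2))} and v_2(n_1 − 1) ≠ v_2(n_2 − 1), then n has odd index, and moreover not all prime factors p of n have v_2(p − 1) = v_2(λ(n)) (i.e., n is in class B1). -/

import Mathlib

open scoped Classical

/-- The Carmichael lambda function: the least `ℓ > 0` with `a ^ ℓ ≡ 1 (mod n)`
for all `a` coprime to `n`. -/
noncomputable def carmichaelLambda (n : ℕ) : ℕ :=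
  sInf {ℓ : ℕ | 0 < ℓ ∧ ∀ a : ℕ, Nat.Coprime a n → a ^ ℓ ≡ 1 [MOD n]}

/-- A Carmichael number: a composite `n` with `a ^ (n-1) ≡ 1 (mod n)`
for all `a` coprime to `n`. -/
def IsCarmichael (n : ℕ) : Prop :=
  1 < n ∧ ¬ n.Prime ∧ ∀ a : ℕ, Nat.Coprime a n → a ^ (n - 1) ≡ 1 [MOD n]

/-- The Euler liars for `n`, as residues in `{0, …, n-1}` coprime to `n` with
`(a/n) ≡ a ^ ((n-1)/2) (mod n)`. -/
noncomputable def eulerLiars (n : ℕ) : Finset ℕ :=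
  (Finset.range n).filter
    (fun a => Nat.Coprime a n ∧ (jacobiSym (a : ℤ) n ≡ (a : ℤ) ^ ((n - 1) / 2) [ZMOD n]))

/-- If `n₁, n₂` are coprime class-A Carmichael numbers whose product is a Carmichael
number, `min{v₂(n₁-1), v₂(n₂-1)} = max{v₂(λ(n₁)), v₂(λ(n₂))}` and
`v₂(n₁-1) ≠ v₂(n₂-1)`, then the product has odd index and not all of its prime factors
`p` satisfy `v₂(p-1) = v₂(λ(n₁n₂))` (i.e. the product is in class B1). -/


lemma pow_modEq_iff_units (n ℓ : ℕ) [NeZero n] :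
    (∀ a : ℕ, Nat.Coprime a n → a ^ ℓ ≡ 1 [MOD n]) ↔ ∀ u : (ZMod n)ˣ, u ^ ℓ = 1 := by
  constructor
  · intro h u
    have hc := ZMod.val_coe_unit_coprime u
    have h2 : (((((u : ZMod n)).val : ℕ) : ZMod n)) ^ ℓ = 1 := by
      have := (ZMod.natCast_eq_natCast_iff _ _ _).mpr (h _ hc)
      push_cast at this
      simpa using this
    rw [ZMod.natCast_val, ZMod.cast_id] at h2
    ext
    simpa using h2
  · intro h a ha
    have := h (ZMod.unitOfCoprime a ha)
    have h2 : ((a : ZMod n)) ^ ℓ = 1 := by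
      have := congrArg (Units.val) this
      simpa [ZMod.coe_unitOfCoprime] using this
    have := (ZMod.natCast_eq_natCast_iff (a ^ ℓ) 1 n).mp (by push_cast; simpa using h2)
    exact this

lemma carmichaelLambda_eq_exponent (n : ℕ) [NeZero n] :
    carmichaelLambda n = Monoid.exponent (ZMod n)ˣ := by
  have hfin : Monoid.exponent (ZMod n)ˣ ≠ 0 := Monoid.exponent_ne_zero_of_finite
  have hmem : Monoid.exponent (ZMod n)ˣ ∈
      {ℓ : ℕ | 0 < ℓ ∧ ∀ a : ℕ, Nat.Coprime a n → a ^ ℓ ≡ 1 [MOD n]} :=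
    ⟨Nat.pos_of_ne_zero hfin,
      (pow_modEq_iff_units n _).mpr (fun u => Monoid.pow_exponent_eq_one u)⟩
  refine le_antisymm (Nat.sInf_le hmem) ?_
  obtain ⟨hpos, hpow⟩ := Nat.sInf_mem (⟨_, hmem⟩ : Set.Nonempty _)
  exact Monoid.exponent_min' _ hpos ((pow_modEq_iff_units n _).mp hpow)

lemma carmichaelLambda_ne_zero (n : ℕ) [NeZero n] : carmichaelLambda n ≠ 0 := by
  rw [carmichaelLambda_eq_exponent]; exact Monoid.exponent_ne_zero_of_finite

lemma pow_carmichaelLambda (n : ℕ) [NeZero n] {a : ℕ} (ha : Nat.Coprime a n) :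
    a ^ carmichaelLambda n ≡ 1 [MOD n] := by
  rw [carmichaelLambda_eq_exponent]
  exact (pow_modEq_iff_units n _).mpr (fun u => Monoid.pow_exponent_eq_one u) a ha

lemma carmichaelLambda_dvd {n : ℕ} [NeZero n] {m : ℕ}
    (hm : ∀ a : ℕ, Nat.Coprime a n → a ^ m ≡ 1 [MOD n]) :
    carmichaelLambda n ∣ m := by
  rw [carmichaelLambda_eq_exponent]
  exact Monoid.exponent_dvd_iff_forall_pow_eq_one.mpr ((pow_modEq_iff_units n m).mp hm)

lemma carmichaelLambda_mul {n₁ n₂ : ℕ} [NeZero n₁] [NeZero n₂] (hcop : Nat.Coprime n₁ n₂) :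
    carmichaelLambda (n₁ * n₂) = Nat.lcm (carmichaelLambda n₁) (carmichaelLambda n₂) := by
  haveI : NeZero (n₁ * n₂) := ⟨mul_ne_zero (NeZero.ne n₁) (NeZero.ne n₂)⟩
  rw [carmichaelLambda_eq_exponent, carmichaelLambda_eq_exponent, carmichaelLambda_eq_exponent]
  rw [Monoid.exponent_eq_of_mulEquiv
    ((Units.mapEquiv (ZMod.chineseRemainder hcop).toMulEquiv).trans MulEquiv.prodUnits)]
  exact Monoid.exponent_prod

lemma sub_one_dvd_carmichaelLambda {n p : ℕ} [NeZero n] (hp : p.Prime) (hpn : p ∣ n) :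
    (p - 1) ∣ carmichaelLambda n := by
  haveI : Fact p.Prime := ⟨hp⟩
  have hn0 : n ≠ 0 := NeZero.ne n
  set e := n.factorization p with he
  set m := n / p ^ e with hm
  have hnsplit : p ^ e * m = n := Nat.ordProj_mul_ordCompl_eq_self n p
  have hcopm : Nat.Coprime p m := Nat.coprime_ordCompl hp hn0
  have hco : Nat.Coprime (p ^ e) m := Nat.Coprime.pow_left e hcopm
  have hepos : 0 < e := hp.factorization_pos_of_dvd hn0 hpn
  have key : ∀ u : (ZMod p)ˣ, u ^ carmichaelLambda n = 1 := by
    intro u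
    set a₀ := (u : ZMod p).val with ha₀
    have hc₀ : Nat.Coprime a₀ p := ZMod.val_coe_unit_coprime u
    obtain ⟨a, ha1, ha2⟩ := Nat.chineseRemainder hco a₀ 1
    have hap : a ≡ a₀ [MOD p] := ha1.of_dvd (dvd_pow_self p hepos.ne')
    have hcap : Nat.Coprime a p := by
      have := hap.gcd_eq
      unfold Nat.Coprime
      rw [this]; exact hc₀
    have hcam : Nat.Coprime a m := by
      have := ha2.gcd_eq
      unfold Nat.Coprime
      rw [this, Nat.gcd_one_left]
    have hcan : Nat.Coprime a n := by
      rw [← hnsplit]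
      exact Nat.Coprime.mul_right (hcap.pow_right e) hcam
    have hmod : a ^ carmichaelLambda n ≡ 1 [MOD p] :=
      (pow_carmichaelLambda n hcan).of_dvd hpn
    have hmod₀ : a₀ ^ carmichaelLambda n ≡ 1 [MOD p] :=
      ((hap.pow _).symm).trans hmod
    have h2 : ((a₀ : ZMod p)) ^ carmichaelLambda n = 1 := by
      have := (ZMod.natCast_eq_natCast_iff _ _ _).mpr hmod₀
      push_cast at this; simpa using this
    rw [ha₀, ZMod.natCast_val, ZMod.cast_id] at h2
    ext
    simpa using h2
  have := Monoid.exponent_dvd_iff_forall_pow_eq_one.mpr key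
  rwa [IsCyclic.exponent_eq_card, Nat.card_eq_fintype_card, ZMod.card_units] at this

lemma padicValNat_eq_of_dvd_not_dvd {x V : ℕ} (hx : x ≠ 0) (h1 : 2 ^ V ∣ x)
    (h2 : ¬ 2 ^ (V + 1) ∣ x) : padicValNat 2 x = V := by
  have hle : V ≤ x.factorization 2 :=
    (Nat.Prime.pow_dvd_iff_le_factorization Nat.prime_two hx).mp h1
  have hlt : ¬ (V + 1 ≤ x.factorization 2) := fun h =>
    h2 ((Nat.Prime.pow_dvd_iff_le_factorization Nat.prime_two hx).mpr h)
  rw [← Nat.factorization_def x Nat.prime_two]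
  omega

lemma padicValNat_le_of_dvd {a b : ℕ} (hb : b ≠ 0) (h : a ∣ b) :
    padicValNat 2 a ≤ padicValNat 2 b := by
  have := (Nat.Prime.pow_dvd_iff_le_factorization Nat.prime_two hb).mp
    ((pow_padicValNat_dvd).trans h)
  rwa [Nat.factorization_def b Nat.prime_two] at this

lemma not_dvd_pow_succ_padicValNat {x : ℕ} (hx : x ≠ 0) :
    ¬ 2 ^ (padicValNat 2 x + 1) ∣ x := by
  intro h
  have := (Nat.Prime.pow_dvd_iff_le_factorization Nat.prime_two hx).mp h
  rw [Nat.factorization_def x Nat.prime_two] at this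
  omega

lemma pow_succ_padicValNat_dvd_of_lt {x V : ℕ} (hx : x ≠ 0) (h : V < padicValNat 2 x) :
    2 ^ (V + 1) ∣ x := by
  refine (Nat.Prime.pow_dvd_iff_le_factorization Nat.prime_two hx).mpr ?_
  rw [Nat.factorization_def x Nat.prime_two]
  omega

lemma padicValNat_lcm {a b : ℕ} (ha : a ≠ 0) (hb : b ≠ 0) :
    padicValNat 2 (Nat.lcm a b) = max (padicValNat 2 a) (padicValNat 2 b) := by
  rw [← Nat.factorization_def _ Nat.prime_two, Nat.factorization_lcm ha hb,
    Finsupp.sup_apply, Nat.factorization_def a Nat.prime_two,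
    Nat.factorization_def b Nat.prime_two]

lemma aux_main (n₁ n₂ : ℕ) (hc₁ : IsCarmichael n₁) (hc₂ : IsCarmichael n₂)
    (hcop : Nat.Coprime n₁ n₂)
    (he₁ : Even ((n₁ - 1) / carmichaelLambda n₁))
    (hn : IsCarmichael (n₁ * n₂))
    (hv : min (padicValNat 2 (n₁ - 1)) (padicValNat 2 (n₂ - 1)) =
      max (padicValNat 2 (carmichaelLambda n₁)) (padicValNat 2 (carmichaelLambda n₂)))
    (hlt : padicValNat 2 (n₁ - 1) < padicValNat 2 (n₂ - 1)) :
    Odd ((n₁ * n₂ - 1) / carmichaelLambda (n₁ * n₂)) ∧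
    ¬ (∀ p ∈ (n₁ * n₂).primeFactors,
        padicValNat 2 (p - 1) = padicValNat 2 (carmichaelLambda (n₁ * n₂))) := by
  have h1 : 1 < n₁ := hc₁.1
  have h2 : 1 < n₂ := hc₂.1
  haveI : NeZero n₁ := ⟨by omega⟩
  haveI : NeZero n₂ := ⟨by omega⟩
  haveI : NeZero (n₁ * n₂) := ⟨by positivity⟩
  have hs1 : n₁ - 1 ≠ 0 := by omega
  have hs2 : n₂ - 1 ≠ 0 := by omega
  have hsn : n₁ * n₂ - 1 ≠ 0 := by
    have : 2 * 2 ≤ n₁ * n₂ := Nat.mul_le_mul h1 h2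
    omega
  have hL1 : carmichaelLambda n₁ ≠ 0 := carmichaelLambda_ne_zero n₁
  have hL2 : carmichaelLambda n₂ ≠ 0 := carmichaelLambda_ne_zero n₂
  have hLn : carmichaelLambda (n₁ * n₂) ≠ 0 := carmichaelLambda_ne_zero (n₁ * n₂)
  set v₁ := padicValNat 2 (n₁ - 1) with hv₁
  set v₂ := padicValNat 2 (n₂ - 1) with hv₂
  set w₁ := padicValNat 2 (carmichaelLambda n₁) with hw₁
  set w₂ := padicValNat 2 (carmichaelLambda n₂) with hw₂
  -- λ(n₁ n₂) valuation
  have hmul : carmichaelLambda (n₁ * n₂) =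
      Nat.lcm (carmichaelLambda n₁) (carmichaelLambda n₂) := carmichaelLambda_mul hcop
  have hvLn : padicValNat 2 (carmichaelLambda (n₁ * n₂)) = max w₁ w₂ := by
    rw [hmul, padicValNat_lcm hL1 hL2]
  have hmax : max w₁ w₂ = v₁ := by
    rw [← hv, min_eq_left hlt.le]
  -- w₁ < v₁ from even index of n₁
  have hd₁ : carmichaelLambda n₁ ∣ n₁ - 1 := carmichaelLambda_dvd hc₁.2.2
  have hi₁ : n₁ - 1 = carmichaelLambda n₁ * ((n₁ - 1) / carmichaelLambda n₁) :=
    (Nat.mul_div_cancel' hd₁).symm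
  have hi₁0 : (n₁ - 1) / carmichaelLambda n₁ ≠ 0 := by
    intro h; rw [h, mul_zero] at hi₁; exact hs1 hi₁
  have hw₁lt : w₁ < v₁ := by
    have hvm : v₁ = w₁ + padicValNat 2 ((n₁ - 1) / carmichaelLambda n₁) := by
      conv_lhs => rw [hv₁, hi₁]
      rw [padicValNat.mul hL1 hi₁0]
    have h2d : 2 ∣ (n₁ - 1) / carmichaelLambda n₁ := he₁.two_dvd
    have := one_le_padicValNat_of_dvd hi₁0 h2d
    omega
  -- v₂(n₁ n₂ - 1) = v₁
  have hsplit : n₁ * n₂ - 1 = n₁ * (n₂ - 1) + (n₁ - 1) := by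
    obtain ⟨k, rfl⟩ : ∃ k, n₂ = k + 1 := ⟨n₂ - 1, by omega⟩
    rw [Nat.add_sub_cancel, Nat.mul_add, mul_one]
    omega
  have hdvd1 : 2 ^ v₁ ∣ n₁ - 1 := pow_padicValNat_dvd
  have hndvd1 : ¬ 2 ^ (v₁ + 1) ∣ n₁ - 1 := not_dvd_pow_succ_padicValNat hs1
  have hdvd2 : 2 ^ (v₁ + 1) ∣ n₂ - 1 := pow_succ_padicValNat_dvd_of_lt hs2 hlt
  have hvn : padicValNat 2 (n₁ * n₂ - 1) = v₁ := by
    refine padicValNat_eq_of_dvd_not_dvd hsn ?_ ?_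
    · rw [hsplit]
      exact dvd_add (Dvd.dvd.mul_left ((pow_dvd_pow 2 (Nat.le_succ v₁)).trans hdvd2) n₁) hdvd1
    · rw [hsplit]
      intro h
      exact hndvd1 ((Nat.dvd_add_right (Dvd.dvd.mul_left hdvd2 n₁)).mp h)
  -- index of n₁ n₂ is odd
  have hdn : carmichaelLambda (n₁ * n₂) ∣ n₁ * n₂ - 1 := carmichaelLambda_dvd hn.2.2
  have hiN : n₁ * n₂ - 1 = carmichaelLambda (n₁ * n₂) * ((n₁ * n₂ - 1) / carmichaelLambda (n₁ * n₂)) :=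
    (Nat.mul_div_cancel' hdn).symm
  have hiN0 : (n₁ * n₂ - 1) / carmichaelLambda (n₁ * n₂) ≠ 0 := by
    intro h; rw [h, mul_zero] at hiN; exact hsn hiN
  have hvN : padicValNat 2 ((n₁ * n₂ - 1) / carmichaelLambda (n₁ * n₂)) = 0 := by
    have := hvn
    rw [hiN, padicValNat.mul hLn hiN0] at this
    rw [hvLn, hmax] at this
    omega
  have hodd : Odd ((n₁ * n₂ - 1) / carmichaelLambda (n₁ * n₂)) := by
    rcases Nat.even_or_odd ((n₁ * n₂ - 1) / carmichaelLambda (n₁ * n₂)) with he | ho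
    · exfalso
      have := one_le_padicValNat_of_dvd hiN0 he.two_dvd
      omega
    · exact ho
  refine ⟨hodd, ?_⟩
  intro hall
  obtain ⟨p, hp, hpd⟩ := Nat.exists_prime_and_dvd (by omega : n₁ ≠ 1)
  have hpmem : p ∈ (n₁ * n₂).primeFactors :=
    Nat.mem_primeFactors.mpr ⟨hp, hpd.mul_right n₂, by positivity⟩
  have hpl : (p - 1) ∣ carmichaelLambda n₁ := sub_one_dvd_carmichaelLambda hp hpd
  have hple : padicValNat 2 (p - 1) ≤ w₁ := padicValNat_le_of_dvd hL1 hpl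
  have := hall p hpmem
  rw [hvLn, hmax] at this
  omega

theorem product_classB1_of_classA (n₁ n₂ : ℕ)
    (hc₁ : IsCarmichael n₁) (hc₂ : IsCarmichael n₂) (hcop : Nat.Coprime n₁ n₂)
    (he₁ : Even ((n₁ - 1) / carmichaelLambda n₁))
    (he₂ : Even ((n₂ - 1) / carmichaelLambda n₂))
    (hn : IsCarmichael (n₁ * n₂))
    (hv : min (padicValNat 2 (n₁ - 1)) (padicValNat 2 (n₂ - 1)) =
      max (padicValNat 2 (carmichaelLambda n₁)) (padicValNat 2 (carmichaelLambda n₂)))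
    (hne : padicValNat 2 (n₁ - 1) ≠ padicValNat 2 (n₂ - 1)) :
    Odd ((n₁ * n₂ - 1) / carmichaelLambda (n₁ * n₂)) ∧
    ¬ (∀ p ∈ (n₁ * n₂).primeFactors,
        padicValNat 2 (p - 1) = padicValNat 2 (carmichaelLambda (n₁ * n₂))) := by
  rcases lt_or_gt_of_ne hne with hlt | hlt
  · exact aux_main n₁ n₂ hc₁ hc₂ hcop he₁ hn hv hlt
  · have := aux_main n₂ n₁ hc₂ hc₁ hcop.symm he₂ (by rwa [mul_comm]) (by rw [min_comm, max_comm]; exact hv) hlt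
    rwa [mul_comm n₂ n₁] at this
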